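/- The systems C^∨C_l^{(2)∗_s} and C^∨C_l^{(2)∗_l} are genuinely distinct: Both R(C^∨C_l^{(2)∗_s}) = (R(BC_l)_s + L_{0,0}) ∪ (R(C^∨C_l)_m + 2ℤa) ∪ (R(C^∨C_l)_l + 2ℤa) and R(C^∨C_l^{(2)∗_l}) = (R(C^∨C_l)_s + ℤa) ∪ (R(C^∨C_l)_m + 2ℤa) ∪ (R(BC_l)_l + L_{0,0}^{2,2}) are non-reduced elliptic root systems in (F,I) with marking ℝa whose quotient modulo ℝa is the image of R(C^∨C_l), and there is no linear automorphism φ of F with I(φ(x),φ(y)) = c·I(x,y) for some c > 0, φ(ℝa) = ℝa, and φ(R(C^∨C_l^{(2)∗_s})) = R(C^∨C_l^{(2)∗_l}). -/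

import Mathlib

open Pointwise

noncomputable section

/-- The ambient space `F = ℝ^{l+2}`, with coordinates `0,…,l-1` for the finite part
and coordinates `l, l+1` corresponding to the radical vectors `a, b`. -/
abbrev V (l : ℕ) : Type := Fin (l + 2) → ℝ

/-- The orthonormal vectors `ε_i`. -/
def εv (l : ℕ) (i : Fin l) : V l := Pi.single (Fin.castAdd 2 i) 1

/-- The radical vector `a`. -/
def av (l : ℕ) : V l := Pi.single (Fin.natAdd l (0 : Fin 2)) 1

/-- The radical vector `b`. -/
def bv (l : ℕ) : V l := Pi.single (Fin.natAdd l (1 : Fin 2)) 1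

/-- The positive semi-definite symmetric bilinear form `I` of signature `(l,2,0)`,
with radical `ℝa + ℝb`. -/
def Iform (l : ℕ) (x y : V l) : ℝ :=
  ∑ i : Fin l, x (Fin.castAdd 2 i) * y (Fin.castAdd 2 i)

/-- Short roots of the finite root system `BC_l`. -/
def BCs (l : ℕ) : Set (V l) := ⋃ i : Fin l, {εv l i, -εv l i}

/-- Middle-length roots of the finite root system `BC_l`. -/
def BCm (l : ℕ) : Set (V l) :=
  ⋃ (i : Fin l) (j : Fin l) (_ : i ≠ j),
    {εv l i + εv l j, εv l i - εv l j, -εv l i - εv l j}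

/-- Long roots of the finite root system `BC_l`. -/
def BCl (l : ℕ) : Set (V l) := ⋃ i : Fin l, {(2 : ℝ) • εv l i, -((2 : ℝ) • εv l i)}

/-- The finite root system `BC_l`. -/
def BCfull (l : ℕ) : Set (V l) := BCs l ∪ BCm l ∪ BCl l

/-- The subset `(kℤ)v` of `F`. -/
def Zv (l : ℕ) (k : ℤ) (v : V l) : Set (V l) := {x | ∃ n : ℤ, x = ((k * n : ℤ) : ℝ) • v}

/-- The subset `(kℤ)a`. -/
def Za (l : ℕ) (k : ℤ) : Set (V l) := Zv l k (av l)

/-- The subset `(kℤ)b`. -/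
def Zb (l : ℕ) (k : ℤ) : Set (V l) := Zv l k (bv l)

/-- The subset `(1+2ℤ)a`. -/
def oddZa (l : ℕ) : Set (V l) := {x | ∃ n : ℤ, x = ((1 + 2 * n : ℤ) : ℝ) • av l}

/-- The subset `L_{i,j}^{s1,s2} = {s2·m·a + s1·n·b : (m-i)(n-j) ≡ 0 mod 2}`;
`L_{i,j} = Lset l i j 1 1`. -/
def Lset (l : ℕ) (i j s1 s2 : ℤ) : Set (V l) :=
  {x | ∃ m n : ℤ, (2 : ℤ) ∣ ((m - i) * (n - j)) ∧
    x = ((s2 * m : ℤ) : ℝ) • av l + ((s1 * n : ℤ) : ℝ) • bv l}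

/-- The subset `{ma + 2nb : m ≡ n mod 2}` occurring in the ◇-type system. -/
def diaL (l : ℕ) : Set (V l) :=
  {x | ∃ m n : ℤ, (2 : ℤ) ∣ (m - n) ∧ x = ((m : ℤ) : ℝ) • av l + ((2 * n : ℤ) : ℝ) • bv l}

/-- The four types of non-reduced affine root systems. -/
inductive AffType | BCC | CvBC | BBv | CvC

/-- First tier number: the multiplier of `ℤb` on the middle part. -/
def tfm : AffType → ℤ | .BCC => 1 | .CvBC => 2 | .BBv => 1 | .CvC => 2

/-- The multiplier of `ℤb` on the long part. -/
def tfl : AffType → ℤ | .BCC => 1 | .CvBC => 4 | .BBv => 2 | .CvC => 2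

/-- Short part of the affine root system `R(X_l)`. -/
def AffS (l : ℕ) (_X : AffType) : Set (V l) := BCs l + Zb l 1

/-- Middle part of the affine root system `R(X_l)`. -/
def AffM (l : ℕ) (X : AffType) : Set (V l) := BCm l + Zb l (tfm X)

/-- Long part of the affine root system `R(X_l)`. -/
def AffL (l : ℕ) (X : AffType) : Set (V l) := BCl l + Zb l (tfl X)

/-- The affine root system `R(X_l)` for `X ∈ {BCC, C^∨BC, BB^∨, C^∨C}`. -/
def Aff (l : ℕ) (X : AffType) : Set (V l) := AffS l X ∪ AffM l X ∪ AffL l X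

/-- The reduced classical types `BC_l^{(1,2)}, BC_l^{(4,2)}, BC_l^{(2,2)σ}(1), BC_l^{(2,2)σ}(2)`
(for `X = BCC, C^∨BC, BB^∨, C^∨C` respectively). -/
def redClassical (l : ℕ) (X : AffType) : Set (V l) :=
  (AffS l X + Za l 1) ∪ (AffM l X + Za l 1) ∪ (AffL l X + oddZa l)

/-- `R(BC_l^{(1,1)∗})`. -/
def RBC11star (l : ℕ) : Set (V l) :=
  (AffS l .BCC + Za l 1) ∪ (AffM l .BCC + Za l 1) ∪ (BCl l + Lset l 1 1 1 1)

/-- `R(BC_l^{(4,4)∗})`. -/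
def RBC44star (l : ℕ) : Set (V l) :=
  (BCs l + Lset l 1 1 1 1) ∪ (AffM l .CvBC + Za l 2) ∪ (AffL l .CvBC + Za l 4)

/-- `R(X_l^{(1)})`. -/
def E1 (l : ℕ) (X : AffType) : Set (V l) := Aff l X + Za l 1

/-- `R(X_l^{(2)}(i))`. -/
def E2 (l : ℕ) (X : AffType) (i : ℤ) : Set (V l) :=
  (AffS l X + Za l 1) ∪ (AffM l X + Za l i) ∪ (AffL l X + Za l 2)

/-- `R(X_l^{(4)})`. -/
def E4 (l : ℕ) (X : AffType) : Set (V l) :=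
  (AffS l X + Za l 1) ∪ (AffM l X + Za l 2) ∪ (AffL l X + Za l 4)

/-- `R(BCC_l^{(1)∗})`-type systems: `BCC1star l 0 0 = R(BCC_l^{(1)∗_0})`,
`BCC1star l 0 1 = R(BCC_l^{(1)∗_{0'}})`, `BCC1star l 1 1 = R(BCC_l^{(1)∗_1}) = R(BC_l^{(1,1)∗})`. -/
def BCC1star (l : ℕ) (i j : ℤ) : Set (V l) :=
  (AffS l .BCC + Za l 1) ∪ (AffM l .BCC + Za l 1) ∪ (BCl l + Lset l i j 1 1)

/-- `R(BCC_l^{(2)∗_p})`. -/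
def BCC2star (l : ℕ) (p : ℤ) : Set (V l) :=
  (AffS l .BCC + Za l 1) ∪ (AffM l .BCC + Za l 2) ∪ (BCl l + Lset l p p 1 2)

/-- `R(C^∨BC_l^{(2)∗_p})`. -/
def CvBC2star (l : ℕ) (p : ℤ) : Set (V l) :=
  (BCs l + Lset l p p 1 1) ∪ (AffM l .CvBC + Za l 2) ∪ (AffL l .CvBC + Za l 2)

/-- `R(C^∨BC_l^{(4)∗})`-type systems: `CvBC4star l 0 0 = R(C^∨BC_l^{(4)∗_0})`,
`CvBC4star l 0 1 = R(C^∨BC_l^{(4)∗_{0'}})`, `CvBC4star l 1 1 = R(C^∨BC_l^{(4)∗_1}) = R(BC_l^{(4,4)∗})`. -/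
def CvBC4star (l : ℕ) (i j : ℤ) : Set (V l) :=
  (BCs l + Lset l i j 1 1) ∪ (AffM l .CvBC + Za l 2) ∪ (AffL l .CvBC + Za l 4)

/-- `R(BB_2^{∨(2)∗})` (its defining pattern, written for general `l`). -/
def BB2star (l : ℕ) : Set (V l) :=
  (BCs l + Za l 1 + Zb l 1) ∪ (BCm l + Lset l 0 0 1 1) ∪ (BCl l + Za l 2 + Zb l 2)

/-- `R(C^∨C_l^{(1)∗_p})`. -/
def CvC1star (l : ℕ) (p : ℤ) : Set (V l) :=
  (AffS l .CvC + Za l 1) ∪ (AffM l .CvC + Za l 1) ∪ (BCl l + Lset l p p 2 1)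

/-- `R(C^∨C_l^{(2)∗})`-type systems: `CvC2star l 0 0 = R(C^∨C_l^{(2)∗_0})`,
`CvC2star l 1 1 = R(C^∨C_l^{(2)∗_1})`, `CvC2star l 1 0 = R(C^∨C_l^{(2)∗_{1'}})`. -/
def CvC2star (l : ℕ) (i j : ℤ) : Set (V l) :=
  (BCs l + Lset l 0 0 1 1) ∪ (AffM l .CvC + Za l 2) ∪ (BCl l + Lset l i j 2 2)

/-- `R(C^∨C_l^{(2)∗_s})`. -/
def CvC2starS (l : ℕ) : Set (V l) :=
  (BCs l + Lset l 0 0 1 1) ∪ (AffM l .CvC + Za l 2) ∪ (AffL l .CvC + Za l 2)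

/-- `R(C^∨C_l^{(2)∗_l})`. -/
def CvC2starL (l : ℕ) : Set (V l) :=
  (AffS l .CvC + Za l 1) ∪ (AffM l .CvC + Za l 2) ∪ (BCl l + Lset l 0 0 2 2)

/-- `R(C^∨C_l^{(4)∗_p})`. -/
def CvC4star (l : ℕ) (p : ℤ) : Set (V l) :=
  (BCs l + Lset l p p 1 1) ∪ (AffM l .CvC + Za l 2) ∪ (AffL l .CvC + Za l 4)

/-- `R(C^∨C_l^{(2)◇})`. -/
def CvC2dia (l : ℕ) : Set (V l) :=
  (AffS l .CvC + Za l 1) ∪ (AffM l .CvC + Za l 1) ∪ (BCl l + diaL l)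

/-- The reflection `w_α`. -/
def reflV (l : ℕ) (α x : V l) : V l := x - (2 * Iform l x α / Iform l α α) • α

/-- A generalized root system in `(F, I)`; since `I` has signature `(l,2,0)`, this is
exactly an elliptic root system. -/
structure IsERS (l : ℕ) (R : Set (V l)) : Prop where
  /-- `R` is discrete. -/
  discrete : ∀ x ∈ R, ∃ ε > 0, ∀ y ∈ R, ‖x - y‖ < ε → y = x
  /-- The root lattice `Q(R)` is full in `F`. -/
  spans : Submodule.span ℝ R = ⊤
  /-- roots are non-isotropic. -/
  nonisotropic : ∀ α ∈ R, Iform l α α ≠ 0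
  /-- integrality: `2 I(α,β)/I(α,α) ∈ ℤ`. -/
  integral : ∀ α ∈ R, ∀ β ∈ R, ∃ n : ℤ, 2 * Iform l α β = (n : ℝ) * Iform l α α
  /-- each reflection `w_α` maps `R` onto `R`. -/
  reflects : ∀ α ∈ R, reflV l α '' R = R
  /-- irreducibility. -/
  irred : ∀ R1 R2 : Set (V l), R1 ∪ R2 = R →
    (∀ x ∈ R1, ∀ y ∈ R2, Iform l x y = 0) → R1 = ∅ ∨ R2 = ∅

/-- `R` is reduced. -/
def IsReducedRS (l : ℕ) (R : Set (V l)) : Prop := ∀ α ∈ R, (2 : ℝ) • α ∉ R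

/-- `R` is non-reduced. -/
def IsNonReducedRS (l : ℕ) (R : Set (V l)) : Prop := ∃ α ∈ R, (2 : ℝ) • α ∈ R

/-- The radical `ℝa + ℝb` of `I`. -/
def radSpan (l : ℕ) : Submodule ℝ (V l) := Submodule.span ℝ {av l, bv l}

/-- The marking line `G = ℝa`. -/
def Ga (l : ℕ) : Submodule ℝ (V l) := Submodule.span ℝ {av l}

/-- `G` is a marking of `R`: a one-dimensional subspace of `rad(I)` such that
`G ∩ Q(R)` is full in `G`. -/
def IsMarking (l : ℕ) (R : Set (V l)) (G : Submodule ℝ (V l)) : Prop :=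
  G ≤ radSpan l ∧ Module.finrank ℝ G = 1 ∧
    ∃ v : V l, v ≠ 0 ∧ v ∈ G ∧ v ∈ AddSubgroup.closure R

/-- `φ` rescales the form `I` by the factor `c`. -/
def IsSimilarity (l : ℕ) (φ : V l ≃ₗ[ℝ] V l) (c : ℝ) : Prop :=
  ∀ x y : V l, Iform l (φ x) (φ y) = c * Iform l x y

/-- Isomorphism of root systems in `(F, I)`. -/
def IsoRS (l : ℕ) (R R' : Set (V l)) : Prop :=
  ∃ (φ : V l ≃ₗ[ℝ] V l) (c : ℝ), 0 < c ∧ IsSimilarity l φ c ∧ φ '' R = R'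

/-- Isomorphism of marked root systems (with marking `ℝa` on both sides). -/
def IsoRSa (l : ℕ) (R R' : Set (V l)) : Prop :=
  ∃ (φ : V l ≃ₗ[ℝ] V l) (c : ℝ), 0 < c ∧ IsSimilarity l φ c ∧
    φ '' (Ga l : Set (V l)) = (Ga l : Set (V l)) ∧ φ '' R = R'

/-- The quotient `R/G` (image of `R` in `F/G`) is non-reduced. -/
def QuotNonReduced (l : ℕ) (R : Set (V l)) (G : Submodule ℝ (V l)) : Prop :=
  ∃ α ∈ R, ∃ β ∈ R, G.mkQ β = (2 : ℝ) • G.mkQ α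

/-- The quotient `R/G` is isomorphic, as an affine root system, to the affine root system
`X ⊆ span(ε_1,…,ε_l,b)`: encoded via `p = ψ ∘ (F → F/G)` for an isomorphism
`ψ : F/G ≅ span(ε_1,…,ε_l,b)` with `Ī(u,v) = c·I(ψu,ψv)` and `ψ(R/G) = X`. -/
def QuotIsType (l : ℕ) (R : Set (V l)) (G : Submodule ℝ (V l)) (X : Set (V l)) : Prop :=
  ∃ (p : V l →ₗ[ℝ] V l) (c : ℝ), 0 < c ∧
    LinearMap.ker p = G ∧
    LinearMap.range p = Submodule.span ℝ (Set.range (εv l) ∪ {bv l}) ∧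
    (∀ x y : V l, Iform l x y = c * Iform l (p x) (p y)) ∧
    p '' R = X

end


noncomputable section AuxBasics
variable {l : ℕ}

/-! ### Coordinate lemmas -/

lemma castAdd_ne_natAdd (i : Fin l) (j : Fin 2) :
    (Fin.castAdd 2 i : Fin (l+2)) ≠ Fin.natAdd l j := by
  intro h
  have := congrArg Fin.val h
  simp only [Fin.coe_castAdd, Fin.coe_natAdd] at this
  omega

lemma εv_apply (i t : Fin l) : εv l i (Fin.castAdd 2 t) = if t = i then 1 else 0 := by
  unfold εv
  rcases eq_or_ne t i with h | h
  · subst h; simp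
  · rw [if_neg h, Pi.single_eq_of_ne]
    simpa [Fin.ext_iff] using h

lemma εv_apply_nat (i : Fin l) (j : Fin 2) : εv l i (Fin.natAdd l j) = 0 := by
  unfold εv
  rw [Pi.single_eq_of_ne (castAdd_ne_natAdd i j).symm]

lemma av_apply_cast (t : Fin l) : av l (Fin.castAdd 2 t) = 0 := by
  unfold av; rw [Pi.single_eq_of_ne (castAdd_ne_natAdd t 0)]

lemma bv_apply_cast (t : Fin l) : bv l (Fin.castAdd 2 t) = 0 := by
  unfold bv; rw [Pi.single_eq_of_ne (castAdd_ne_natAdd t 1)]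

lemma av_apply_nat0 : av l (Fin.natAdd l 0) = 1 := by unfold av; simp
lemma av_apply_nat1 : av l (Fin.natAdd l 1) = 0 := by
  unfold av; rw [Pi.single_eq_of_ne]; simp [Fin.ext_iff]
lemma bv_apply_nat0 : bv l (Fin.natAdd l 0) = 0 := by
  unfold bv; rw [Pi.single_eq_of_ne]; simp [Fin.ext_iff]
lemma bv_apply_nat1 : bv l (Fin.natAdd l 1) = 1 := by unfold bv; simp

lemma av_ne_zero : av l ≠ 0 := by
  intro h
  have := congrFun h (Fin.natAdd l 0)
  rw [av_apply_nat0] at this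
  simpa using this

/-! ### Bilinearity of `Iform` -/

lemma Iform_comm (x y : V l) : Iform l x y = Iform l y x := by
  unfold Iform; simp [mul_comm]

lemma Iform_add_left (x y z : V l) : Iform l (x + y) z = Iform l x z + Iform l y z := by
  unfold Iform; rw [← Finset.sum_add_distrib]; simp [add_mul]

lemma Iform_add_right (x y z : V l) : Iform l x (y + z) = Iform l x y + Iform l x z := by
  rw [Iform_comm, Iform_add_left, Iform_comm y x, Iform_comm z x]

lemma Iform_smul_left (c : ℝ) (x z : V l) : Iform l (c • x) z = c * Iform l x z := by
  unfold Iform; rw [Finset.mul_sum]; simp [mul_assoc]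

lemma Iform_smul_right (c : ℝ) (x z : V l) : Iform l x (c • z) = c * Iform l x z := by
  rw [Iform_comm, Iform_smul_left, Iform_comm]

lemma Iform_neg_left (x z : V l) : Iform l (-x) z = - Iform l x z := by
  rw [← neg_one_smul ℝ x, Iform_smul_left]; ring

lemma Iform_neg_right (x z : V l) : Iform l x (-z) = - Iform l x z := by
  rw [Iform_comm, Iform_neg_left, Iform_comm]

lemma Iform_sub_left (x y z : V l) : Iform l (x - y) z = Iform l x z - Iform l y z := by
  rw [sub_eq_add_neg, Iform_add_left, Iform_neg_left, sub_eq_add_neg]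

lemma Iform_av_left (y : V l) : Iform l (av l) y = 0 := by
  unfold Iform; simp [av_apply_cast]

lemma Iform_av_right (y : V l) : Iform l y (av l) = 0 := by
  rw [Iform_comm]; exact Iform_av_left y

lemma Iform_bv_left (y : V l) : Iform l (bv l) y = 0 := by
  unfold Iform; simp [bv_apply_cast]

lemma Iform_bv_right (y : V l) : Iform l y (bv l) = 0 := by
  rw [Iform_comm]; exact Iform_bv_left y

lemma Iform_εv_εv (i j : Fin l) : Iform l (εv l i) (εv l j) = if i = j then 1 else 0 := by
  unfold Iform
  rcases eq_or_ne i j with h | h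
  · subst h
    rw [if_pos rfl, Finset.sum_eq_single i]
    · rw [εv_apply]; simp
    · intro t _ ht; rw [εv_apply, if_neg ht]; ring
    · simp
  · rw [if_neg h, Finset.sum_eq_zero]
    intro t _
    rw [εv_apply, εv_apply]
    rcases eq_or_ne t i with h1 | h1
    · subst h1; rw [if_neg h]; ring
    · rw [if_neg h1]; ring

lemma Iform_εv_right (x : V l) (i : Fin l) : Iform l x (εv l i) = x (Fin.castAdd 2 i) := by
  unfold Iform
  rw [Finset.sum_eq_single i]
  · rw [εv_apply, if_pos rfl, mul_one]
  · intro t _ ht; rw [εv_apply, if_neg ht, mul_zero]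
  · simp

end AuxBasics


noncomputable section AuxClasses
variable {l : ℕ}

/-- pm sign predicate -/
def pm (σ : ℝ) : Prop := σ = 1 ∨ σ = -1

lemma pm_one : pm (1 : ℝ) := Or.inl rfl
lemma pm_neg_one : pm (-1 : ℝ) := Or.inr rfl
lemma pm.ne_zero {σ : ℝ} (h : pm σ) : σ ≠ 0 := by rcases h with h | h <;> subst h <;> norm_num
lemma pm.mul {σ τ : ℝ} (h : pm σ) (h' : pm τ) : pm (σ * τ) := by
  rcases h with h | h <;> rcases h' with h' | h' <;> subst h <;> subst h' <;> simp [pm]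
lemma pm.neg {σ : ℝ} (h : pm σ) : pm (-σ) := by
  rcases h with h | h <;> subst h <;> simp [pm]
lemma pm.sq {σ : ℝ} (h : pm σ) : σ * σ = 1 := by
  rcases h with h | h <;> subst h <;> norm_num

lemma mem_BCs (i : Fin l) {σ : ℝ} (hσ : pm σ) : σ • εv l i ∈ BCs l := by
  unfold BCs
  rw [Set.mem_iUnion]
  refine ⟨i, ?_⟩
  rcases hσ with h | h <;> subst h <;> simp

lemma mem_BCm {i j : Fin l} (hij : i ≠ j) {σ τ : ℝ} (hσ : pm σ) (hτ : pm τ) :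
    σ • εv l i + τ • εv l j ∈ BCm l := by
  unfold BCm
  simp only [Set.mem_iUnion]
  rcases hσ with h | h <;> rcases hτ with h' | h' <;> subst h <;> subst h'
  · exact ⟨i, j, hij, by simp⟩
  · refine ⟨i, j, hij, ?_⟩; simp [sub_eq_add_neg]
  · refine ⟨j, i, hij.symm, ?_⟩
    have : (-1 : ℝ) • εv l i + (1:ℝ) • εv l j = εv l j - εv l i := by module
    rw [this]; simp
  · refine ⟨i, j, hij, ?_⟩
    have : (-1 : ℝ) • εv l i + (-1:ℝ) • εv l j = -εv l i - εv l j := by module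
    rw [this]; simp

lemma mem_BCl (i : Fin l) {σ : ℝ} (hσ : pm σ) : (2 * σ) • εv l i ∈ BCl l := by
  unfold BCl
  rw [Set.mem_iUnion]
  refine ⟨i, ?_⟩
  rcases hσ with h | h <;> subst h
  · simp
  · have : (2 * (-1) : ℝ) • εv l i = -((2:ℝ) • εv l i) := by module
    rw [this]; simp

lemma BCs_cases {x : V l} (h : x ∈ BCs l) :
    ∃ (i : Fin l) (σ : ℝ), pm σ ∧ x = σ • εv l i := by
  unfold BCs at h
  rw [Set.mem_iUnion] at h
  obtain ⟨i, hi⟩ := h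
  rcases hi with h | h
  · exact ⟨i, 1, pm_one, by simpa using h⟩
  · refine ⟨i, -1, pm_neg_one, ?_⟩
    simp only [Set.mem_singleton_iff] at h
    rw [h]; module

lemma BCm_cases {x : V l} (h : x ∈ BCm l) :
    ∃ (i j : Fin l) (σ τ : ℝ), i ≠ j ∧ pm σ ∧ pm τ ∧ x = σ • εv l i + τ • εv l j := by
  unfold BCm at h
  simp only [Set.mem_iUnion] at h
  obtain ⟨i, j, hij, hx⟩ := h
  rcases hx with h | h | h
  · exact ⟨i, j, 1, 1, hij, pm_one, pm_one, by rw [h]; module⟩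
  · exact ⟨i, j, 1, -1, hij, pm_one, pm_neg_one, by rw [h]; module⟩
  · simp only [Set.mem_singleton_iff] at h
    exact ⟨i, j, -1, -1, hij, pm_neg_one, pm_neg_one, by rw [h]; module⟩

lemma BCl_cases {x : V l} (h : x ∈ BCl l) :
    ∃ (i : Fin l) (σ : ℝ), pm σ ∧ x = (2 * σ) • εv l i := by
  unfold BCl at h
  rw [Set.mem_iUnion] at h
  obtain ⟨i, hi⟩ := h
  rcases hi with h | h
  · exact ⟨i, 1, pm_one, by rw [h]; module⟩
  · simp only [Set.mem_singleton_iff] at h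
    exact ⟨i, -1, pm_neg_one, by rw [h]; module⟩

lemma mem_BCfull_iff {x : V l} : x ∈ BCfull l ↔ x ∈ BCs l ∨ x ∈ BCm l ∨ x ∈ BCl l := by
  unfold BCfull
  simp [Set.mem_union, or_assoc]

/-! ### lengths and coordinates of finite roots -/

lemma Iform_BCs {x : V l} (h : x ∈ BCs l) : Iform l x x = 1 := by
  obtain ⟨i, σ, hσ, rfl⟩ := BCs_cases h
  rw [Iform_smul_left, Iform_smul_right, Iform_εv_εv, if_pos rfl]
  rw [← mul_assoc, hσ.sq, one_mul]

lemma Iform_BCm {x : V l} (h : x ∈ BCm l) : Iform l x x = 2 := by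
  obtain ⟨i, j, σ, τ, hij, hσ, hτ, rfl⟩ := BCm_cases h
  have h1 := hσ.sq; have h2 := hτ.sq
  simp only [Iform_add_left, Iform_add_right, Iform_smul_left, Iform_smul_right, Iform_εv_εv,
    if_pos, if_neg hij, if_neg hij.symm, eq_self_iff_true, if_true]
  nlinarith

lemma Iform_BCl {x : V l} (h : x ∈ BCl l) : Iform l x x = 4 := by
  obtain ⟨i, σ, hσ, rfl⟩ := BCl_cases h
  rw [Iform_smul_left, Iform_smul_right, Iform_εv_εv, if_pos rfl]
  have := hσ.sq
  nlinarith

lemma Iform_BCfull_pos {x : V l} (h : x ∈ BCfull l) : 0 < Iform l x x := by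
  rcases mem_BCfull_iff.1 h with h | h | h
  · rw [Iform_BCs h]; norm_num
  · rw [Iform_BCm h]; norm_num
  · rw [Iform_BCl h]; norm_num

lemma BCfull_nat_coord {x : V l} (h : x ∈ BCfull l) (j : Fin 2) : x (Fin.natAdd l j) = 0 := by
  rcases mem_BCfull_iff.1 h with h | h | h
  · obtain ⟨i, σ, hσ, rfl⟩ := BCs_cases h
    simp [εv_apply_nat]
  · obtain ⟨i, j', σ, τ, hij, hσ, hτ, rfl⟩ := BCm_cases h
    simp [εv_apply_nat]
  · obtain ⟨i, σ, hσ, rfl⟩ := BCl_cases h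
    simp [εv_apply_nat]

/-- integer coordinates of finite roots, with evenness for long roots -/
lemma BCfull_int_coord {x : V l} (h : x ∈ BCfull l) :
    ∃ g : Fin l → ℤ, (∀ i, x (Fin.castAdd 2 i) = (g i : ℝ)) ∧
      (x ∈ BCl l → ∀ i, 2 ∣ g i) := by
  rcases mem_BCfull_iff.1 h with h' | h' | h'
  · obtain ⟨i, σ, hσ, rfl⟩ := BCs_cases h'
    rcases hσ with hs | hs <;> subst hs
    · refine ⟨fun t => if t = i then 1 else 0, fun t => ?_, fun hc => absurd (Iform_BCs h') (by rw [Iform_BCl hc]; norm_num)⟩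
      simp only [Pi.smul_apply, εv_apply, smul_eq_mul, one_mul]
      split <;> simp
    · refine ⟨fun t => if t = i then -1 else 0, fun t => ?_, fun hc => absurd (Iform_BCs h') (by rw [Iform_BCl hc]; norm_num)⟩
      simp only [Pi.smul_apply, εv_apply, smul_eq_mul]
      split <;> simp
  · obtain ⟨i, j, σ, τ, hij, hσ, hτ, rfl⟩ := BCm_cases h'
    obtain ⟨zσ, hzσ⟩ : ∃ z : ℤ, σ = (z : ℝ) := by
      rcases hσ with h | h <;> subst h
      exacts [⟨1, by norm_num⟩, ⟨-1, by norm_num⟩]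
    obtain ⟨zτ, hzτ⟩ : ∃ z : ℤ, τ = (z : ℝ) := by
      rcases hτ with h | h <;> subst h
      exacts [⟨1, by norm_num⟩, ⟨-1, by norm_num⟩]
    refine ⟨fun t => (if t = i then zσ else 0) + (if t = j then zτ else 0), fun t => ?_,
      fun hc => absurd (Iform_BCm h') (by rw [Iform_BCl hc]; norm_num)⟩
    simp only [Pi.add_apply, Pi.smul_apply, εv_apply, smul_eq_mul, hzσ, hzτ]
    push_cast
    split <;> split <;> ring
  · obtain ⟨i, σ, hσ, rfl⟩ := BCl_cases h'
    obtain ⟨zσ, hzσ⟩ : ∃ z : ℤ, σ = (z : ℝ) := by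
      rcases hσ with h | h <;> subst h
      exacts [⟨1, by norm_num⟩, ⟨-1, by norm_num⟩]
    refine ⟨fun t => if t = i then 2 * zσ else 0, fun t => ?_, fun _ t => ?_⟩
    · simp only [Pi.smul_apply, εv_apply, smul_eq_mul, hzσ]
      push_cast
      split <;> ring
    · dsimp only
      split <;> simp

lemma BCfull_exists_coord_ne {x : V l} (h : x ∈ BCfull l) :
    ∃ i : Fin l, x (Fin.castAdd 2 i) ≠ 0 := by
  rcases mem_BCfull_iff.1 h with h' | h' | h'
  · obtain ⟨i, σ, hσ, rfl⟩ := BCs_cases h'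
    refine ⟨i, ?_⟩
    simpa [εv_apply] using hσ.ne_zero
  · obtain ⟨i, j, σ, τ, hij, hσ, hτ, rfl⟩ := BCm_cases h'
    refine ⟨i, ?_⟩
    simpa [εv_apply, hij, hij.symm] using hσ.ne_zero
  · obtain ⟨i, σ, hσ, rfl⟩ := BCl_cases h'
    refine ⟨i, ?_⟩
    have := hσ.ne_zero
    simp [εv_apply]
    intro hc
    exact absurd hc this

end AuxClasses


noncomputable section AuxMembership
variable {l : ℕ}

/-- radical vector `m a + n b` -/
def radv (l : ℕ) (m n : ℤ) : V l := ((m : ℤ) : ℝ) • av l + ((n : ℤ) : ℝ) • bv l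

lemma Iform_radv_left (m n : ℤ) (y : V l) : Iform l (radv l m n) y = 0 := by
  unfold radv
  rw [Iform_add_left, Iform_smul_left, Iform_smul_left, Iform_av_left, Iform_bv_left]
  ring

lemma Iform_radv_right (m n : ℤ) (y : V l) : Iform l y (radv l m n) = 0 := by
  rw [Iform_comm]; exact Iform_radv_left m n y

lemma Iform_add_radv (x y : V l) (m n p q : ℤ) :
    Iform l (x + radv l m n) (y + radv l p q) = Iform l x y := by
  rw [Iform_add_left, Iform_add_right, Iform_radv_left, Iform_radv_right]
  ring

lemma radv_cast (m n : ℤ) (t : Fin l) : radv l m n (Fin.castAdd 2 t) = 0 := by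
  simp [radv, av_apply_cast, bv_apply_cast]

lemma radv_nat0 (m n : ℤ) : radv l m n (Fin.natAdd l 0) = (m : ℝ) := by
  simp [radv, av_apply_nat0, bv_apply_nat0]

lemma radv_nat1 (m n : ℤ) : radv l m n (Fin.natAdd l 1) = (n : ℝ) := by
  simp [radv, av_apply_nat1, bv_apply_nat1]

/-! ### Membership characterizations -/

lemma mem_part_s_S {x : V l} :
    x ∈ BCs l + Lset l 0 0 1 1 ↔
      ∃ α ∈ BCs l, ∃ m n : ℤ, 2 ∣ m * n ∧ x = α + radv l m n := by
  rw [Set.mem_add]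
  constructor
  · rintro ⟨α, hα, y, hy, rfl⟩
    obtain ⟨m, n, hd, rfl⟩ := hy
    refine ⟨α, hα, m, n, by simpa using hd, ?_⟩
    simp [radv]
  · rintro ⟨α, hα, m, n, hd, rfl⟩
    refine ⟨α, hα, radv l m n, ⟨m, n, by simpa using hd, by simp [radv]⟩, rfl⟩

lemma mem_part_s_L {x : V l} :
    x ∈ AffS l .CvC + Za l 1 ↔
      ∃ α ∈ BCs l, ∃ m n : ℤ, x = α + radv l m n := by
  unfold AffS Za Zv Zb
  constructor
  · rintro ⟨y, hy, z, hz, rfl⟩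
    obtain ⟨α, hα, w, ⟨n, rfl⟩, rfl⟩ := Set.mem_add.1 hy
    obtain ⟨m, rfl⟩ := hz
    refine ⟨α, hα, m, n, ?_⟩
    simp [radv]
    module
  · rintro ⟨α, hα, m, n, rfl⟩
    refine ⟨α + ((1 * n : ℤ) : ℝ) • bv l, Set.mem_add.2 ⟨α, hα, _, ⟨n, rfl⟩, rfl⟩,
      ((1 * m : ℤ) : ℝ) • av l, ⟨m, rfl⟩, ?_⟩
    simp [radv]
    module

lemma mem_part_m {x : V l} :
    x ∈ AffM l .CvC + Za l 2 ↔
      ∃ α ∈ BCm l, ∃ m n : ℤ, 2 ∣ m ∧ 2 ∣ n ∧ x = α + radv l m n := by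
  unfold AffM Za Zv Zb tfm
  constructor
  · rintro ⟨y, hy, z, hz, rfl⟩
    obtain ⟨α, hα, w, ⟨n, rfl⟩, rfl⟩ := Set.mem_add.1 hy
    obtain ⟨m, rfl⟩ := hz
    refine ⟨α, hα, 2 * m, 2 * n, ⟨m, rfl⟩, ⟨n, rfl⟩, ?_⟩
    simp [radv]
    module
  · rintro ⟨α, hα, m, n, ⟨m', rfl⟩, ⟨n', rfl⟩, rfl⟩
    refine ⟨α + ((2 * n' : ℤ) : ℝ) • bv l, Set.mem_add.2 ⟨α, hα, _, ⟨n', rfl⟩, rfl⟩,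
      ((2 * m' : ℤ) : ℝ) • av l, ⟨m', rfl⟩, ?_⟩
    simp [radv]
    module

lemma mem_part_l_S {x : V l} :
    x ∈ AffL l .CvC + Za l 2 ↔
      ∃ α ∈ BCl l, ∃ m n : ℤ, 2 ∣ m ∧ 2 ∣ n ∧ x = α + radv l m n := by
  unfold AffL Za Zv Zb tfl
  constructor
  · rintro ⟨y, hy, z, hz, rfl⟩
    obtain ⟨α, hα, w, ⟨n, rfl⟩, rfl⟩ := Set.mem_add.1 hy
    obtain ⟨m, rfl⟩ := hz
    refine ⟨α, hα, 2 * m, 2 * n, ⟨m, rfl⟩, ⟨n, rfl⟩, ?_⟩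
    simp [radv]
    module
  · rintro ⟨α, hα, m, n, ⟨m', rfl⟩, ⟨n', rfl⟩, rfl⟩
    refine ⟨α + ((2 * n' : ℤ) : ℝ) • bv l, Set.mem_add.2 ⟨α, hα, _, ⟨n', rfl⟩, rfl⟩,
      ((2 * m' : ℤ) : ℝ) • av l, ⟨m', rfl⟩, ?_⟩
    simp [radv]
    module

lemma mem_part_l_L {x : V l} :
    x ∈ BCl l + Lset l 0 0 2 2 ↔
      ∃ α ∈ BCl l, ∃ m n : ℤ, 2 ∣ m * n ∧ x = α + radv l (2 * m) (2 * n) := by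
  rw [Set.mem_add]
  constructor
  · rintro ⟨α, hα, y, hy, rfl⟩
    obtain ⟨m, n, hd, rfl⟩ := hy
    refine ⟨α, hα, m, n, by simpa using hd, ?_⟩
    simp [radv]
  · rintro ⟨α, hα, m, n, hd, rfl⟩
    exact ⟨α, hα, radv l (2 * m) (2 * n), ⟨m, n, by simpa using hd, by simp [radv]⟩, rfl⟩

/-- master membership for `CvC2starS` -/
lemma mem_starS {x : V l} :
    x ∈ CvC2starS l ↔
      (∃ α ∈ BCs l, ∃ m n : ℤ, 2 ∣ m * n ∧ x = α + radv l m n) ∨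
      (∃ α ∈ BCm l, ∃ m n : ℤ, 2 ∣ m ∧ 2 ∣ n ∧ x = α + radv l m n) ∨
      (∃ α ∈ BCl l, ∃ m n : ℤ, 2 ∣ m ∧ 2 ∣ n ∧ x = α + radv l m n) := by
  unfold CvC2starS
  rw [Set.mem_union, Set.mem_union, mem_part_s_S, mem_part_m, mem_part_l_S, or_assoc]

/-- master membership for `CvC2starL` -/
lemma mem_starL {x : V l} :
    x ∈ CvC2starL l ↔
      (∃ α ∈ BCs l, ∃ m n : ℤ, x = α + radv l m n) ∨
      (∃ α ∈ BCm l, ∃ m n : ℤ, 2 ∣ m ∧ 2 ∣ n ∧ x = α + radv l m n) ∨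
      (∃ α ∈ BCl l, ∃ m n : ℤ, 2 ∣ m * n ∧ x = α + radv l (2 * m) (2 * n)) := by
  unfold CvC2starL
  rw [Set.mem_union, Set.mem_union, mem_part_s_L, mem_part_m, mem_part_l_L, or_assoc]

/-- membership for the affine system `Aff l .CvC` -/
lemma mem_affCvC {x : V l} :
    x ∈ Aff l .CvC ↔
      (∃ α ∈ BCs l, ∃ n : ℤ, x = α + radv l 0 n) ∨
      (∃ α ∈ BCm l, ∃ n : ℤ, 2 ∣ n ∧ x = α + radv l 0 n) ∨
      (∃ α ∈ BCl l, ∃ n : ℤ, 2 ∣ n ∧ x = α + radv l 0 n) := by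
  unfold Aff AffS AffM AffL Zb Zv tfm tfl
  rw [Set.mem_union, Set.mem_union, or_assoc]
  constructor
  · rintro (h | h | h)
    · obtain ⟨α, hα, w, ⟨n, rfl⟩, rfl⟩ := Set.mem_add.1 h
      exact Or.inl ⟨α, hα, n, by simp [radv]⟩
    · obtain ⟨α, hα, w, ⟨n, rfl⟩, rfl⟩ := Set.mem_add.1 h
      exact Or.inr (Or.inl ⟨α, hα, 2 * n, ⟨n, rfl⟩, by simp [radv]⟩)
    · obtain ⟨α, hα, w, ⟨n, rfl⟩, rfl⟩ := Set.mem_add.1 h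
      exact Or.inr (Or.inr ⟨α, hα, 2 * n, ⟨n, rfl⟩, by simp [radv]⟩)
  · rintro (⟨α, hα, n, rfl⟩ | ⟨α, hα, n, ⟨n', rfl⟩, rfl⟩ | ⟨α, hα, n, ⟨n', rfl⟩, rfl⟩)
    · exact Or.inl (Set.mem_add.2 ⟨α, hα, _, ⟨n, rfl⟩, by simp [radv]⟩)
    · exact Or.inr (Or.inl (Set.mem_add.2 ⟨α, hα, _, ⟨n', rfl⟩, by simp [radv]⟩))
    · exact Or.inr (Or.inr (Set.mem_add.2 ⟨α, hα, _, ⟨n', rfl⟩, by simp [radv]⟩))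

end AuxMembership


noncomputable section AuxRefl
variable {l : ℕ}

lemma mem_BCm1 {i j : Fin l} (hij : i ≠ j) {τ : ℝ} (hτ : pm τ) :
    εv l i + τ • εv l j ∈ BCm l := by
  have := mem_BCm hij pm_one hτ
  rwa [one_smul] at this

lemma reflV_smul_left {c : ℝ} (hc : c ≠ 0) (a x : V l) :
    reflV l (c • a) x = reflV l a x := by
  unfold reflV
  have h2 : Iform l (c • a) (c • a) = c * (c * Iform l a a) := by
    rw [Iform_smul_left, Iform_smul_right]
  rw [Iform_smul_right, h2, smul_smul]
  have h3 : 2 * (c * Iform l x a) / (c * (c * Iform l a a)) * c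
      = 2 * Iform l x a / Iform l a a := by
    by_cases hA : Iform l a a = 0
    · simp [hA]
    · field_simp
  rw [h3]

lemma reflV_smul_right (c : ℝ) (a x : V l) :
    reflV l a (c • x) = c • reflV l a x := by
  unfold reflV
  rw [Iform_smul_left, smul_sub, smul_smul]
  congr 1
  ring

lemma reflV_invol (a x : V l) (ha : Iform l a a ≠ 0) :
    reflV l a (reflV l a x) = x := by
  unfold reflV
  rw [Iform_sub_left, Iform_smul_left]
  have h : (2 * (Iform l x a - 2 * Iform l x a / Iform l a a * Iform l a a) / Iform l a a)
      = -(2 * Iform l x a / Iform l a a) := by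
    field_simp
    ring
  rw [h]
  module

lemma reduce_a {a : V l} (ha : a ∈ BCfull l) :
    (∃ p, reflV l a = reflV l (εv l p)) ∨
      (∃ p q τ, p ≠ q ∧ pm τ ∧ reflV l a = reflV l (εv l p + τ • εv l q)) := by
  rcases mem_BCfull_iff.1 ha with h | h | h
  · obtain ⟨i, σ, hσ, rfl⟩ := BCs_cases h
    exact Or.inl ⟨i, funext fun x => reflV_smul_left hσ.ne_zero _ x⟩
  · obtain ⟨i, j, σ, τ, hij, hσ, hτ, rfl⟩ := BCm_cases h
    have ha2 : σ • (εv l i + (σ * τ) • εv l j) = σ • εv l i + τ • εv l j := by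
      rw [smul_add, smul_smul, ← mul_assoc, hσ.sq, one_mul]
    refine Or.inr ⟨i, j, σ * τ, hij, hσ.mul hτ, ?_⟩
    rw [← ha2]
    exact funext fun x => reflV_smul_left hσ.ne_zero _ x
  · obtain ⟨i, σ, hσ, rfl⟩ := BCl_cases h
    have h2σ : (2 * σ : ℝ) ≠ 0 := by
      rcases hσ with h | h <;> subst h <;> norm_num
    exact Or.inl ⟨i, funext fun x => reflV_smul_left h2σ _ x⟩

lemma BCs_smul {x : V l} (h : x ∈ BCs l) {σ : ℝ} (hσ : pm σ) : σ • x ∈ BCs l := by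
  obtain ⟨i, τ, hτ, rfl⟩ := BCs_cases h
  rw [smul_smul]
  exact mem_BCs i (hσ.mul hτ)

lemma BCm_smul {x : V l} (h : x ∈ BCm l) {σ : ℝ} (hσ : pm σ) : σ • x ∈ BCm l := by
  obtain ⟨i, j, τ, τ', hij, hτ, hτ', rfl⟩ := BCm_cases h
  rw [smul_add, smul_smul, smul_smul]
  exact mem_BCm hij (hσ.mul hτ) (hσ.mul hτ')

lemma BCs_two_smul {x : V l} (h : x ∈ BCs l) {σ : ℝ} (hσ : pm σ) : (2 * σ) • x ∈ BCl l := by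
  obtain ⟨i, τ, hτ, rfl⟩ := BCs_cases h
  rw [smul_smul]
  have : 2 * σ * τ = 2 * (σ * τ) := by ring
  rw [this]
  exact mem_BCl i (hσ.mul hτ)

/-! ### key finite reflection computations -/

lemma key1 (p r : Fin l) : reflV l (εv l p) (εv l r) ∈ BCs l := by
  unfold reflV
  have hA : Iform l (εv l p) (εv l p) = 1 := by simp [Iform_εv_εv]
  rw [hA]
  rcases eq_or_ne r p with h | h
  · subst h
    have hnum : Iform l (εv l r) (εv l r) = 1 := by simp [Iform_εv_εv]
    rw [hnum]
    refine Set.mem_of_eq_of_mem ?_ (mem_BCs r pm_neg_one)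
    module
  · have hnum : Iform l (εv l r) (εv l p) = 0 := by simp [Iform_εv_εv, h]
    rw [hnum]
    refine Set.mem_of_eq_of_mem ?_ (mem_BCs r pm_one)
    module

lemma key3 {p q : Fin l} (hpq : p ≠ q) {τ : ℝ} (hτ : pm τ) (r : Fin l) :
    reflV l (εv l p + τ • εv l q) (εv l r) ∈ BCs l := by
  have hsq := hτ.sq
  have hA : Iform l (εv l p + τ • εv l q) (εv l p + τ • εv l q) = 2 :=
    Iform_BCm (mem_BCm1 hpq hτ)
  unfold reflV
  rw [hA]
  rcases eq_or_ne r p with h | h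
  · subst h
    have hnum : Iform l (εv l r) (εv l r + τ • εv l q) = 1 := by
      simp [Iform_add_right, Iform_smul_right, Iform_εv_εv, hpq] <;> ring
    rw [hnum]
    refine Set.mem_of_eq_of_mem ?_ (mem_BCs q hτ.neg)
    module
  · rcases eq_or_ne r q with h' | h'
    · subst h'
      have hnum : Iform l (εv l r) (εv l p + τ • εv l r) = τ := by
        simp [Iform_add_right, Iform_smul_right, Iform_εv_εv, h] <;> ring
      rw [hnum]
      have hc : (2 * τ / 2 : ℝ) = τ := by ring
      rw [hc]
      have hexp : τ • (εv l p + τ • εv l r) = τ • εv l p + εv l r := by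
        rw [smul_add, smul_smul, hsq, one_smul]
      rw [hexp]
      refine Set.mem_of_eq_of_mem ?_ (mem_BCs p hτ.neg)
      module
    · have hnum : Iform l (εv l r) (εv l p + τ • εv l q) = 0 := by
        simp [Iform_add_right, Iform_smul_right, Iform_εv_εv, h, h'] <;> ring
      rw [hnum]
      refine Set.mem_of_eq_of_mem ?_ (mem_BCs r pm_one)
      module

lemma key2 (p : Fin l) {r s : Fin l} (hrs : r ≠ s) {σ : ℝ} (hσ : pm σ) :
    reflV l (εv l p) (εv l r + σ • εv l s) ∈ BCm l := by
  have hA : Iform l (εv l p) (εv l p) = 1 := by simp [Iform_εv_εv]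
  unfold reflV
  rw [hA]
  rcases eq_or_ne r p with h | h
  · subst h
    have hnum : Iform l (εv l r + σ • εv l s) (εv l r) = 1 := by
      simp [Iform_add_left, Iform_smul_left, Iform_εv_εv, hrs.symm] <;> ring
    rw [hnum]
    refine Set.mem_of_eq_of_mem ?_ (mem_BCm hrs pm_neg_one hσ)
    module
  · rcases eq_or_ne s p with h' | h'
    · subst h'
      have hnum : Iform l (εv l r + σ • εv l s) (εv l s) = σ := by
        simp [Iform_add_left, Iform_smul_left, Iform_εv_εv, h] <;> ring
      rw [hnum]
      refine Set.mem_of_eq_of_mem ?_ (mem_BCm hrs pm_one hσ.neg)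
      module
    · have hnum : Iform l (εv l r + σ • εv l s) (εv l p) = 0 := by
        simp [Iform_add_left, Iform_smul_left, Iform_εv_εv, h, h'] <;> ring
      rw [hnum]
      refine Set.mem_of_eq_of_mem ?_ (mem_BCm hrs pm_one hσ)
      module

lemma key4 {p q r s : Fin l} (hpq : p ≠ q) (hrs : r ≠ s) {σ τ : ℝ}
    (hσ : pm σ) (hτ : pm τ) :
    reflV l (εv l p + τ • εv l q) (εv l r + σ • εv l s) ∈ BCm l := by
  have hsq := hτ.sq
  have hA : Iform l (εv l p + τ • εv l q) (εv l p + τ • εv l q) = 2 :=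
    Iform_BCm (mem_BCm1 hpq hτ)
  unfold reflV
  rw [hA]
  rcases eq_or_ne r p with hrp | hrp
  · subst hrp
    have hrq : r ≠ q := hpq
    have hsp : s ≠ r := hrs.symm
    rcases eq_or_ne s q with hsq' | hsq'
    · -- pattern 1 : r=p, s=q
      subst hsq'
      have hnum : Iform l (εv l r + σ • εv l s) (εv l r + τ • εv l s) = 1 + σ * τ := by
        simp [Iform_add_left, Iform_add_right, Iform_smul_left, Iform_smul_right,
          Iform_εv_εv, hrs, hrs.symm] <;> ring
      rw [hnum]
      rcases hσ with hσ' | hσ' <;> rcases hτ with hτ' | hτ' <;> subst hσ' <;> subst hτ'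
      · refine Set.mem_of_eq_of_mem ?_ (mem_BCm hrs pm_neg_one pm_neg_one)
        module
      · refine Set.mem_of_eq_of_mem ?_ (mem_BCm hrs pm_one pm_one)
        module
      · refine Set.mem_of_eq_of_mem ?_ (mem_BCm hrs pm_one pm_neg_one)
        module
      · refine Set.mem_of_eq_of_mem ?_ (mem_BCm hrs pm_neg_one pm_one)
        module
    · -- pattern 3 : r=p, s ∉ {p,q}
      have hnum : Iform l (εv l r + σ • εv l s) (εv l r + τ • εv l q) = 1 := by
        simp [Iform_add_left, Iform_add_right, Iform_smul_left, Iform_smul_right,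
          Iform_εv_εv, hrq, hsp, hsq'] <;> ring
      rw [hnum]
      refine Set.mem_of_eq_of_mem ?_ (mem_BCm hsq' hσ hτ.neg)
      module
  · rcases eq_or_ne r q with hrq | hrq
    · subst hrq
      have hsq2 : s ≠ r := hrs.symm
      rcases eq_or_ne s p with hsp | hsp
      · -- pattern 2 : r=q, s=p
        subst hsp
        have hnum : Iform l (εv l r + σ • εv l s) (εv l s + τ • εv l r) = τ + σ := by
          simp [Iform_add_left, Iform_add_right, Iform_smul_left, Iform_smul_right,
            Iform_εv_εv, hrs, hrs.symm] <;> ring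
        rw [hnum]
        rcases hσ with hσ' | hσ' <;> rcases hτ with hτ' | hτ' <;> subst hσ' <;> subst hτ'
        · refine Set.mem_of_eq_of_mem ?_ (mem_BCm hrs pm_neg_one pm_neg_one)
          module
        · refine Set.mem_of_eq_of_mem ?_ (mem_BCm hrs pm_one pm_one)
          module
        · refine Set.mem_of_eq_of_mem ?_ (mem_BCm hrs pm_one pm_neg_one)
          module
        · refine Set.mem_of_eq_of_mem ?_ (mem_BCm hrs pm_neg_one pm_one)
          module
      · -- pattern 4 : r=q, s ∉ {p,q}
        have hnum : Iform l (εv l r + σ • εv l s) (εv l p + τ • εv l r) = τ := by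
          simp [Iform_add_left, Iform_add_right, Iform_smul_left, Iform_smul_right,
            Iform_εv_εv, hrp, hsp, hsq2] <;> ring
        rw [hnum]
        have hc : (2 * τ / 2 : ℝ) = τ := by ring
        rw [hc]
        have hexp : τ • (εv l p + τ • εv l r) = τ • εv l p + εv l r := by
          rw [smul_add, smul_smul, hsq, one_smul]
        rw [hexp]
        refine Set.mem_of_eq_of_mem ?_ (mem_BCm hsp hσ hτ.neg)
        module
    · rcases eq_or_ne s p with hsp | hsp
      · -- pattern 5 : s=p
        subst hsp
        have hnum : Iform l (εv l r + σ • εv l s) (εv l s + τ • εv l q) = σ := by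
          simp [Iform_add_left, Iform_add_right, Iform_smul_left, Iform_smul_right,
            Iform_εv_εv, hrp, hrq, hpq] <;> ring
        rw [hnum]
        have hc : (2 * σ / 2 : ℝ) = σ := by ring
        rw [hc]
        refine Set.mem_of_eq_of_mem ?_ (mem_BCm hrq pm_one (hσ.mul hτ).neg)
        module
      · rcases eq_or_ne s q with hsq3 | hsq3
        · -- pattern 6 : s=q
          subst hsq3
          have hnum : Iform l (εv l r + σ • εv l s) (εv l p + τ • εv l s) = σ * τ := by
            simp [Iform_add_left, Iform_add_right, Iform_smul_left, Iform_smul_right,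
              Iform_εv_εv, hrp, hrq, hsp] <;> ring
          rw [hnum]
          have hc : (2 * (σ * τ) / 2 : ℝ) = σ * τ := by ring
          rw [hc]
          have hexp : (σ * τ) • (εv l p + τ • εv l s) = (σ * τ) • εv l p + σ • εv l s := by
            rw [smul_add, smul_smul, mul_assoc, hsq, mul_one]
          rw [hexp]
          refine Set.mem_of_eq_of_mem ?_ (mem_BCm hrp pm_one (hσ.mul hτ).neg)
          module
        · -- pattern 7 : disjoint
          have hnum : Iform l (εv l r + σ • εv l s) (εv l p + τ • εv l q) = 0 := by
            simp [Iform_add_left, Iform_add_right, Iform_smul_left, Iform_smul_right,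
              Iform_εv_εv, hrp, hrq, hsp, hsq3] <;> ring
          rw [hnum]
          refine Set.mem_of_eq_of_mem ?_ (mem_BCm hrs pm_one hσ)
          module

/-! ### class preservation -/

lemma refl_BCs {a x : V l} (ha : a ∈ BCfull l) (hx : x ∈ BCs l) : reflV l a x ∈ BCs l := by
  obtain ⟨r, σ, hσ, rfl⟩ := BCs_cases hx
  rw [reflV_smul_right]
  refine BCs_smul ?_ hσ
  rcases reduce_a ha with ⟨p, hp⟩ | ⟨p, q, τ, hpq, hτ, hp⟩
  · rw [hp]; exact key1 p r
  · rw [hp]; exact key3 hpq hτ r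

lemma refl_BCm {a x : V l} (ha : a ∈ BCfull l) (hx : x ∈ BCm l) : reflV l a x ∈ BCm l := by
  obtain ⟨r, s, σ, τ', hrs, hσ, hτ', rfl⟩ := BCm_cases hx
  have hx2 : σ • εv l r + τ' • εv l s = σ • (εv l r + (σ * τ') • εv l s) := by
    rw [smul_add, smul_smul, ← mul_assoc, hσ.sq, one_mul]
  rw [hx2, reflV_smul_right]
  refine BCm_smul ?_ hσ
  rcases reduce_a ha with ⟨p, hp⟩ | ⟨p, q, τ, hpq, hτ, hp⟩
  · rw [hp]; exact key2 p hrs (hσ.mul hτ')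
  · rw [hp]; exact key4 hpq hrs (hσ.mul hτ') hτ

lemma refl_BCl {a x : V l} (ha : a ∈ BCfull l) (hx : x ∈ BCl l) : reflV l a x ∈ BCl l := by
  obtain ⟨r, σ, hσ, rfl⟩ := BCl_cases hx
  rw [reflV_smul_right]
  have hBCs : reflV l a (εv l r) ∈ BCs l := by
    rcases reduce_a ha with ⟨p, hp⟩ | ⟨p, q, τ, hpq, hτ, hp⟩
    · rw [hp]; exact key1 p r
    · rw [hp]; exact key3 hpq hτ r
  exact BCs_two_smul hBCs hσ

lemma refl_BCfull {a x : V l} (ha : a ∈ BCfull l) (hx : x ∈ BCfull l) :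
    reflV l a x ∈ BCfull l := by
  rcases mem_BCfull_iff.1 hx with h | h | h
  · exact mem_BCfull_iff.2 (Or.inl (refl_BCs ha h))
  · exact mem_BCfull_iff.2 (Or.inr (Or.inl (refl_BCm ha h)))
  · exact mem_BCfull_iff.2 (Or.inr (Or.inr (refl_BCl ha h)))

end AuxRefl


noncomputable section AuxCoef
variable {l : ℕ}

lemma two_dvd_mul {m n : ℤ} : 2 ∣ m * n ↔ 2 ∣ m ∨ 2 ∣ n := by
  constructor
  · intro h
    have := Int.Prime.dvd_mul' (p := 2) (by norm_num) h
    simpa using this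
  · rintro (⟨k, rfl⟩ | ⟨k, rfl⟩)
    · exact ⟨k * n, by ring⟩
    · exact ⟨m * k, by ring⟩

lemma Iform_eq_int (x a : V l) (gx ga : Fin l → ℤ)
    (hx : ∀ i, x (Fin.castAdd 2 i) = (gx i : ℝ)) (ha : ∀ i, a (Fin.castAdd 2 i) = (ga i : ℝ)) :
    Iform l x a = ((∑ i, gx i * ga i : ℤ) : ℝ) := by
  unfold Iform
  push_cast
  exact Finset.sum_congr rfl fun i _ => by rw [hx i, ha i]

/-- Existence of the integer reflection coefficient, with parity information. -/
lemma exists_int_coef {a x : V l} (ha : a ∈ BCfull l) (hx : x ∈ BCfull l) :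
    ∃ k : ℤ, ((k : ℝ) = 2 * Iform l x a / Iform l a a) ∧
      (a ∈ BCs l → 2 ∣ k) ∧ (x ∈ BCl l → 2 ∣ k) ∧ (a ∈ BCs l → x ∈ BCl l → 4 ∣ k) := by
  obtain ⟨ga, hga, hgal⟩ := BCfull_int_coord ha
  obtain ⟨gx, hgx, hgxl⟩ := BCfull_int_coord hx
  have hI : Iform l x a = ((∑ i, gx i * ga i : ℤ) : ℝ) := Iform_eq_int x a gx ga hgx hga
  set J : ℤ := ∑ i, gx i * ga i with hJ
  have hxlJ : x ∈ BCl l → 2 ∣ J := fun h =>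
    Finset.dvd_sum fun i _ => Dvd.dvd.mul_right (hgxl h i) (ga i)
  rcases mem_BCfull_iff.1 ha with h | h | h
  · have hA : Iform l a a = 1 := Iform_BCs h
    refine ⟨2 * J, by rw [hI, hA]; push_cast; ring, fun _ => ⟨J, rfl⟩, fun hxl => ?_, fun _ hxl => ?_⟩
    · obtain ⟨J', hJ'⟩ := hxlJ hxl
      exact ⟨2 * J', by omega⟩
    · obtain ⟨J', hJ'⟩ := hxlJ hxl
      exact ⟨J', by omega⟩
  · have hA : Iform l a a = 2 := Iform_BCm h
    have has : a ∉ BCs l := fun hs => by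
      have h1 := Iform_BCs hs
      rw [hA] at h1
      norm_num at h1
    refine ⟨J, by rw [hI, hA]; push_cast; ring, fun hs => absurd hs has,
      fun hxl => hxlJ hxl, fun hs => absurd hs has⟩
  · have hA : Iform l a a = 4 := Iform_BCl h
    have has : a ∉ BCs l := fun hs => by
      have h1 := Iform_BCs hs
      rw [hA] at h1
      norm_num at h1
    have hJeven : 2 ∣ J := Finset.dvd_sum fun i _ => Dvd.dvd.mul_left (hgal h i) (gx i)
    obtain ⟨J', hJ'⟩ := hJeven
    refine ⟨J', ?_, fun hs => absurd hs has, fun hxl => ?_, fun hs => absurd hs has⟩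
    · rw [hI, hA, hJ']
      push_cast
      ring
    · have h4 : (4 : ℤ) ∣ J := Finset.dvd_sum fun i _ => by
        have h1 := hgxl hxl i
        have h2 := hgal h i
        obtain ⟨u, hu⟩ := h1
        obtain ⟨v, hv⟩ := h2
        exact ⟨u * v, by rw [hu, hv]; ring⟩
      omega

/-- Decomposition of the elliptic reflection into finite and radical parts. -/
lemma reflV_decomp {aa xx : V l} (haa : aa ∈ BCfull l) (p q m n : ℤ) (k : ℤ)
    (hk : (k : ℝ) = 2 * Iform l xx aa / Iform l aa aa) :
    reflV l (aa + radv l p q) (xx + radv l m n)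
      = reflV l aa xx + radv l (m - k * p) (n - k * q) := by
  unfold reflV
  rw [Iform_add_radv, Iform_add_radv, ← hk]
  unfold radv
  push_cast
  module

lemma Iform_self_ne_zero_of_BCfull {aa : V l} (haa : aa ∈ BCfull l) (p q : ℤ) :
    Iform l (aa + radv l p q) (aa + radv l p q) ≠ 0 := by
  rw [Iform_add_radv]
  exact ne_of_gt (Iform_BCfull_pos haa)

/-- Reflection closure for `CvC2starS`. -/
lemma reflV_mem_starS {α x : V l} (hα : α ∈ CvC2starS l) (hx : x ∈ CvC2starS l) :
    reflV l α x ∈ CvC2starS l := by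
  -- decompose α
  have hαd : ∃ aa p q, aa ∈ BCfull l ∧ α = aa + radv l p q ∧
      (aa ∈ BCs l ∨ (2 ∣ p ∧ 2 ∣ q)) := by
    rcases mem_starS.1 hα with ⟨aa, h1, p, q, h2, h3⟩ | ⟨aa, h1, p, q, h2, h2', h3⟩ |
      ⟨aa, h1, p, q, h2, h2', h3⟩
    · exact ⟨aa, p, q, mem_BCfull_iff.2 (Or.inl h1), h3, Or.inl h1⟩
    · exact ⟨aa, p, q, mem_BCfull_iff.2 (Or.inr (Or.inl h1)), h3, Or.inr ⟨h2, h2'⟩⟩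
    · exact ⟨aa, p, q, mem_BCfull_iff.2 (Or.inr (Or.inr h1)), h3, Or.inr ⟨h2, h2'⟩⟩
  obtain ⟨aa, p, q, haaf, rfl, hαcond⟩ := hαd
  rcases mem_starS.1 hx with ⟨xx, hx1, m, n, hx2, rfl⟩ | ⟨xx, hx1, m, n, hx2, hx2', rfl⟩ |
    ⟨xx, hx1, m, n, hx2, hx2', rfl⟩
  · -- x short
    have hxxf : xx ∈ BCfull l := mem_BCfull_iff.2 (Or.inl hx1)
    obtain ⟨k, hk, hk1, _, _⟩ := exists_int_coef haaf hxxf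
    rw [reflV_decomp haaf p q m n k hk]
    have hkp : 2 ∣ k * p ∧ 2 ∣ k * q := by
      rcases hαcond with hs | ⟨hp, hq⟩
      · obtain ⟨k', rfl⟩ := hk1 hs
        exact ⟨⟨k' * p, by ring⟩, ⟨k' * q, by ring⟩⟩
      · obtain ⟨p', rfl⟩ := hp
        obtain ⟨q', rfl⟩ := hq
        exact ⟨⟨k * p', by ring⟩, ⟨k * q', by ring⟩⟩
    refine mem_starS.2 (Or.inl ⟨reflV l aa xx, refl_BCs haaf hx1, m - k * p, n - k * q, ?_, rfl⟩)
    rw [two_dvd_mul] at hx2 ⊢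
    obtain ⟨hu, hv⟩ := hkp
    omega
  · -- x middle
    have hxxf : xx ∈ BCfull l := mem_BCfull_iff.2 (Or.inr (Or.inl hx1))
    obtain ⟨k, hk, hk1, _, _⟩ := exists_int_coef haaf hxxf
    rw [reflV_decomp haaf p q m n k hk]
    have hkp : 2 ∣ k * p ∧ 2 ∣ k * q := by
      rcases hαcond with hs | ⟨hp, hq⟩
      · obtain ⟨k', rfl⟩ := hk1 hs
        exact ⟨⟨k' * p, by ring⟩, ⟨k' * q, by ring⟩⟩
      · obtain ⟨p', rfl⟩ := hp
        obtain ⟨q', rfl⟩ := hq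
        exact ⟨⟨k * p', by ring⟩, ⟨k * q', by ring⟩⟩
    obtain ⟨hu, hv⟩ := hkp
    exact mem_starS.2 (Or.inr (Or.inl ⟨reflV l aa xx, refl_BCm haaf hx1, m - k * p, n - k * q,
      by omega, by omega, rfl⟩))
  · -- x long
    have hxxf : xx ∈ BCfull l := mem_BCfull_iff.2 (Or.inr (Or.inr hx1))
    obtain ⟨k, hk, hk1, _, _⟩ := exists_int_coef haaf hxxf
    rw [reflV_decomp haaf p q m n k hk]
    have hkp : 2 ∣ k * p ∧ 2 ∣ k * q := by
      rcases hαcond with hs | ⟨hp, hq⟩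
      · obtain ⟨k', rfl⟩ := hk1 hs
        exact ⟨⟨k' * p, by ring⟩, ⟨k' * q, by ring⟩⟩
      · obtain ⟨p', rfl⟩ := hp
        obtain ⟨q', rfl⟩ := hq
        exact ⟨⟨k * p', by ring⟩, ⟨k * q', by ring⟩⟩
    obtain ⟨hu, hv⟩ := hkp
    exact mem_starS.2 (Or.inr (Or.inr ⟨reflV l aa xx, refl_BCl haaf hx1, m - k * p, n - k * q,
      by omega, by omega, rfl⟩))

/-- Reflection closure for `CvC2starL`. -/
lemma reflV_mem_starL {α x : V l} (hα : α ∈ CvC2starL l) (hx : x ∈ CvC2starL l) :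
    reflV l α x ∈ CvC2starL l := by
  have hαd : ∃ aa p q, aa ∈ BCfull l ∧ α = aa + radv l p q ∧
      (aa ∈ BCs l ∨ (2 ∣ p ∧ 2 ∣ q)) := by
    rcases mem_starL.1 hα with ⟨aa, h1, p, q, h3⟩ | ⟨aa, h1, p, q, h2, h2', h3⟩ |
      ⟨aa, h1, p, q, h2, h3⟩
    · exact ⟨aa, p, q, mem_BCfull_iff.2 (Or.inl h1), h3, Or.inl h1⟩
    · exact ⟨aa, p, q, mem_BCfull_iff.2 (Or.inr (Or.inl h1)), h3, Or.inr ⟨h2, h2'⟩⟩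
    · exact ⟨aa, 2 * p, 2 * q, mem_BCfull_iff.2 (Or.inr (Or.inr h1)), h3,
        Or.inr ⟨⟨p, rfl⟩, ⟨q, rfl⟩⟩⟩
  obtain ⟨aa, p, q, haaf, rfl, hαcond⟩ := hαd
  rcases mem_starL.1 hx with ⟨xx, hx1, m, n, rfl⟩ | ⟨xx, hx1, m, n, hx2, hx2', rfl⟩ |
    ⟨xx, hx1, m, n, hx2, rfl⟩
  · -- x short : no conditions
    have hxxf : xx ∈ BCfull l := mem_BCfull_iff.2 (Or.inl hx1)
    obtain ⟨k, hk, _, _, _⟩ := exists_int_coef haaf hxxf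
    rw [reflV_decomp haaf p q m n k hk]
    exact mem_starL.2 (Or.inl ⟨reflV l aa xx, refl_BCs haaf hx1, m - k * p, n - k * q, rfl⟩)
  · -- x middle
    have hxxf : xx ∈ BCfull l := mem_BCfull_iff.2 (Or.inr (Or.inl hx1))
    obtain ⟨k, hk, hk1, _, _⟩ := exists_int_coef haaf hxxf
    rw [reflV_decomp haaf p q m n k hk]
    have hkp : 2 ∣ k * p ∧ 2 ∣ k * q := by
      rcases hαcond with hs | ⟨hp, hq⟩
      · obtain ⟨k', rfl⟩ := hk1 hs
        exact ⟨⟨k' * p, by ring⟩, ⟨k' * q, by ring⟩⟩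
      · obtain ⟨p', rfl⟩ := hp
        obtain ⟨q', rfl⟩ := hq
        exact ⟨⟨k * p', by ring⟩, ⟨k * q', by ring⟩⟩
    obtain ⟨hu, hv⟩ := hkp
    exact mem_starL.2 (Or.inr (Or.inl ⟨reflV l aa xx, refl_BCm haaf hx1, m - k * p, n - k * q,
      by omega, by omega, rfl⟩))
  · -- x long : coefficients 2m, 2n with 2 ∣ m*n
    have hxxf : xx ∈ BCfull l := mem_BCfull_iff.2 (Or.inr (Or.inr hx1))
    obtain ⟨k, hk, hk1, hk2, hk3⟩ := exists_int_coef haaf hxxf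
    rw [reflV_decomp haaf p q (2 * m) (2 * n) k hk]
    -- need 4 ∣ k*p and 4 ∣ k*q
    have hkp : 4 ∣ k * p ∧ 4 ∣ k * q := by
      rcases hαcond with hs | ⟨hp, hq⟩
      · obtain ⟨k', rfl⟩ := hk3 hs hx1
        exact ⟨⟨k' * p, by ring⟩, ⟨k' * q, by ring⟩⟩
      · obtain ⟨k', rfl⟩ := hk2 hx1
        obtain ⟨p', rfl⟩ := hp
        obtain ⟨q', rfl⟩ := hq
        exact ⟨⟨k' * p', by ring⟩, ⟨k' * q', by ring⟩⟩
    obtain ⟨⟨u, hu⟩, ⟨v, hv⟩⟩ := hkp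
    refine mem_starL.2 (Or.inr (Or.inr ⟨reflV l aa xx, refl_BCl haaf hx1, m - 2 * u, n - 2 * v,
      ?_, ?_⟩))
    · rw [two_dvd_mul] at hx2 ⊢
      omega
    · have e1 : 2 * m - k * p = 2 * (m - 2 * u) := by rw [hu]; ring
      have e2 : 2 * n - k * q = 2 * (n - 2 * v) := by rw [hv]; ring
      rw [e1, e2]

end AuxCoef


noncomputable section AuxERS
variable {l : ℕ}

lemma radv_zero : radv l 0 0 = 0 := by simp [radv]

lemma εv_mem_BCs (i : Fin l) : εv l i ∈ BCs l := by
  have := mem_BCs i pm_one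
  rwa [one_smul] at this

lemma εε_mem_BCm {i j : Fin l} (hij : i ≠ j) : εv l i + εv l j ∈ BCm l := by
  have := mem_BCm1 hij pm_one
  rwa [one_smul] at this

lemma twoεv_mem_BCl (i : Fin l) : (2 : ℝ) • εv l i ∈ BCl l := by
  unfold BCl
  exact Set.mem_iUnion.2 ⟨i, Or.inl rfl⟩

/-- both systems admit this decomposition -/
def HasDecomp (R : Set (V l)) : Prop :=
  ∀ x ∈ R, ∃ aa ∈ BCfull l, ∃ m n : ℤ, x = aa + radv l m n

lemma decomp_starS : HasDecomp (CvC2starS l) := by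
  intro x hx
  rcases mem_starS.1 hx with ⟨aa, h1, m, n, _, rfl⟩ | ⟨aa, h1, m, n, _, _, rfl⟩ |
    ⟨aa, h1, m, n, _, _, rfl⟩
  · exact ⟨aa, mem_BCfull_iff.2 (Or.inl h1), m, n, rfl⟩
  · exact ⟨aa, mem_BCfull_iff.2 (Or.inr (Or.inl h1)), m, n, rfl⟩
  · exact ⟨aa, mem_BCfull_iff.2 (Or.inr (Or.inr h1)), m, n, rfl⟩

lemma decomp_starL : HasDecomp (CvC2starL l) := by
  intro x hx
  rcases mem_starL.1 hx with ⟨aa, h1, m, n, rfl⟩ | ⟨aa, h1, m, n, _, _, rfl⟩ |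
    ⟨aa, h1, m, n, _, rfl⟩
  · exact ⟨aa, mem_BCfull_iff.2 (Or.inl h1), m, n, rfl⟩
  · exact ⟨aa, mem_BCfull_iff.2 (Or.inr (Or.inl h1)), m, n, rfl⟩
  · exact ⟨aa, mem_BCfull_iff.2 (Or.inr (Or.inr h1)), 2 * m, 2 * n, rfl⟩

lemma int_coords {R : Set (V l)} (hd : HasDecomp R) :
    ∀ x ∈ R, ∀ t : Fin (l + 2), ∃ z : ℤ, x t = (z : ℝ) := by
  intro x hx t
  obtain ⟨aa, haa, m, n, rfl⟩ := hd x hx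
  obtain ⟨g, hg, _⟩ := BCfull_int_coord haa
  induction t using Fin.addCases with
  | left i =>
    refine ⟨g i, ?_⟩
    rw [Pi.add_apply, hg i, radv_cast, add_zero]
  | right j =>
    have hcase : j = 0 ∨ j = 1 := by
      fin_cases j
      · exact Or.inl rfl
      · exact Or.inr rfl
    rcases hcase with rfl | rfl
    · refine ⟨m, ?_⟩
      rw [Pi.add_apply, BCfull_nat_coord haa 0, radv_nat0, zero_add]
    · refine ⟨n, ?_⟩
      rw [Pi.add_apply, BCfull_nat_coord haa 1, radv_nat1, zero_add]

lemma discrete_of_decomp {R : Set (V l)} (hd : HasDecomp R) :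
    ∀ x ∈ R, ∃ ε > 0, ∀ y ∈ R, ‖x - y‖ < ε → y = x := by
  intro x hx
  refine ⟨1, by norm_num, fun y hy hlt => ?_⟩
  funext t
  obtain ⟨zx, hzx⟩ := int_coords hd x hx t
  obtain ⟨zy, hzy⟩ := int_coords hd y hy t
  have h1 : |x t - y t| ≤ ‖x - y‖ := by
    have := norm_le_pi_norm (x - y) t
    simpa [Real.norm_eq_abs] using this
  have h2 : |((zx - zy : ℤ) : ℝ)| < 1 := by
    push_cast
    rw [← hzx, ← hzy]
    exact lt_of_le_of_lt h1 hlt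
  have h3 : |zx - zy| < 1 := by exact_mod_cast h2
  rw [abs_lt] at h3
  have h4 : zx = zy := by omega
  rw [hzx, hzy, h4]

lemma nonisotropic_of_decomp {R : Set (V l)} (hd : HasDecomp R) :
    ∀ α ∈ R, Iform l α α ≠ 0 := by
  intro α hα
  obtain ⟨aa, haa, m, n, rfl⟩ := hd α hα
  rw [Iform_add_radv]
  exact ne_of_gt (Iform_BCfull_pos haa)

lemma integral_of_decomp {R : Set (V l)} (hd : HasDecomp R) :
    ∀ α ∈ R, ∀ β ∈ R, ∃ n : ℤ, 2 * Iform l α β = (n : ℝ) * Iform l α α := by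
  intro α hα β hβ
  obtain ⟨aa, haa, m, n, rfl⟩ := hd α hα
  obtain ⟨bb, hbb, m', n', rfl⟩ := hd β hβ
  obtain ⟨k, hk, _, _, _⟩ := exists_int_coef haa hbb
  have hAne : Iform l aa aa ≠ 0 := ne_of_gt (Iform_BCfull_pos haa)
  rw [eq_div_iff hAne] at hk
  refine ⟨k, ?_⟩
  rw [Iform_add_radv, Iform_add_radv, Iform_comm]
  linarith [hk]

lemma reflects_of {R : Set (V l)} (hd : HasDecomp R)
    (hcl : ∀ α ∈ R, ∀ x ∈ R, reflV l α x ∈ R) :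
    ∀ α ∈ R, reflV l α '' R = R := by
  intro α hα
  apply Set.Subset.antisymm
  · rintro _ ⟨x, hx, rfl⟩
    exact hcl α hα x hx
  · intro y hy
    refine ⟨reflV l α y, hcl α hα y hy, ?_⟩
    exact reflV_invol α y (nonisotropic_of_decomp hd α hα)

lemma span_top_of {R : Set (V l)} (hl : 1 ≤ l) (hε : ∀ i, εv l i ∈ R)
    (hac : ∃ x ∈ R, ∃ i, ∃ c : ℝ, c ≠ 0 ∧ x = εv l i + c • av l)
    (hbc : ∃ x ∈ R, ∃ i, ∃ c : ℝ, c ≠ 0 ∧ x = εv l i + c • bv l) :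
    Submodule.span ℝ R = ⊤ := by
  have hεsp : ∀ i, εv l i ∈ Submodule.span ℝ R := fun i => Submodule.subset_span (hε i)
  have hav : av l ∈ Submodule.span ℝ R := by
    obtain ⟨x, hx, i, c, hc, rfl⟩ := hac
    have h1 : av l = c⁻¹ • ((εv l i + c • av l) - εv l i) := by
      rw [add_sub_cancel_left, smul_smul, inv_mul_cancel₀ hc, one_smul]
    rw [h1]
    exact Submodule.smul_mem _ _ (Submodule.sub_mem _ (Submodule.subset_span hx) (hεsp i))
  have hbv : bv l ∈ Submodule.span ℝ R := by
    obtain ⟨x, hx, i, c, hc, rfl⟩ := hbc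
    have h1 : bv l = c⁻¹ • ((εv l i + c • bv l) - εv l i) := by
      rw [add_sub_cancel_left, smul_smul, inv_mul_cancel₀ hc, one_smul]
    rw [h1]
    exact Submodule.smul_mem _ _ (Submodule.sub_mem _ (Submodule.subset_span hx) (hεsp i))
  have hsingle : ∀ t : Fin (l + 2), Pi.single t (1 : ℝ) ∈ Submodule.span ℝ R := by
    intro t
    induction t using Fin.addCases with
    | left i =>
      have h := hεsp i
      unfold εv at h
      exact h
    | right j =>
      fin_cases j
      · have h := hav
        unfold av at h
        exact h
      · have h := hbv
        unfold bv at h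
        exact h
  apply le_antisymm le_top
  rw [← (Pi.basisFun ℝ (Fin (l + 2))).span_eq]
  apply Submodule.span_le.2
  rintro _ ⟨t, rfl⟩
  have : (Pi.basisFun ℝ (Fin (l + 2))) t = Pi.single t 1 := by
    simp [Pi.basisFun_apply]
  rw [this]
  exact hsingle t

lemma irred_of {R : Set (V l)} (hd : HasDecomp R) (hε : ∀ i, εv l i ∈ R)
    (hm : ∀ i j : Fin l, i ≠ j → εv l i + εv l j ∈ R) :
    ∀ R1 R2 : Set (V l), R1 ∪ R2 = R →
      (∀ x ∈ R1, ∀ y ∈ R2, Iform l x y = 0) → R1 = ∅ ∨ R2 = ∅ := by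
  intro R1 R2 hu horth
  by_contra hcon
  push_neg at hcon
  obtain ⟨h1, h2⟩ := hcon
  obtain ⟨x, hx⟩ := h1
  obtain ⟨y, hy⟩ := h2
  have hxR : x ∈ R := by rw [← hu]; exact Or.inl hx
  have hyR : y ∈ R := by rw [← hu]; exact Or.inr hy
  have step : ∀ u ∈ R1, ∀ w ∈ R, Iform l u w ≠ 0 → w ∈ R1 := by
    intro u hu1 w hw hne0
    have hw' : w ∈ R1 ∪ R2 := by rw [hu]; exact hw
    rcases hw' with h | h
    · exact h
    · exact absurd (horth u hu1 w h) hne0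
  have hne : ∀ z ∈ R, ∃ i : Fin l, z (Fin.castAdd 2 i) ≠ 0 := by
    intro z hz
    obtain ⟨aa, haa, m, n, rfl⟩ := hd z hz
    obtain ⟨i, hi⟩ := BCfull_exists_coord_ne haa
    refine ⟨i, ?_⟩
    rw [Pi.add_apply, radv_cast, add_zero]
    exact hi
  obtain ⟨i, hi⟩ := hne x hxR
  obtain ⟨j, hj⟩ := hne y hyR
  have hεi : εv l i ∈ R1 := by
    refine step x hx (εv l i) (hε i) ?_
    rw [Iform_εv_right]
    exact hi
  have hεj : εv l j ∈ R1 := by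
    rcases eq_or_ne i j with rfl | hij
    · exact hεi
    · have h1 : εv l i + εv l j ∈ R1 := by
        refine step (εv l i) hεi _ (hm i j hij) ?_
        simp [Iform_add_right, Iform_εv_εv, hij]
      refine step _ h1 (εv l j) (hε j) ?_
      simp only [Iform_εv_right, Pi.add_apply, εv_apply]
      split <;> simp_all
  have : Iform l (εv l j) y = 0 := horth _ hεj y hy
  rw [Iform_comm, Iform_εv_right] at this
  exact hj this

end AuxERS


noncomputable section AuxFinal
variable {l : ℕ}

lemma radv_av (m : ℤ) : radv l m 0 = ((m : ℤ) : ℝ) • av l := by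
  simp [radv]

lemma radv_bv (n : ℤ) : radv l 0 n = ((n : ℤ) : ℝ) • bv l := by
  simp [radv]

lemma short_mem_S {aa : V l} (h : aa ∈ BCs l) (m n : ℤ) (hmn : 2 ∣ m * n) :
    aa + radv l m n ∈ CvC2starS l := mem_starS.2 (Or.inl ⟨aa, h, m, n, hmn, rfl⟩)

lemma mid_mem_S {aa : V l} (h : aa ∈ BCm l) (m n : ℤ) (hm : 2 ∣ m) (hn : 2 ∣ n) :
    aa + radv l m n ∈ CvC2starS l := mem_starS.2 (Or.inr (Or.inl ⟨aa, h, m, n, hm, hn, rfl⟩))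

lemma long_mem_S {aa : V l} (h : aa ∈ BCl l) (m n : ℤ) (hm : 2 ∣ m) (hn : 2 ∣ n) :
    aa + radv l m n ∈ CvC2starS l := mem_starS.2 (Or.inr (Or.inr ⟨aa, h, m, n, hm, hn, rfl⟩))

lemma short_mem_L {aa : V l} (h : aa ∈ BCs l) (m n : ℤ) :
    aa + radv l m n ∈ CvC2starL l := mem_starL.2 (Or.inl ⟨aa, h, m, n, rfl⟩)

lemma mid_mem_L {aa : V l} (h : aa ∈ BCm l) (m n : ℤ) (hm : 2 ∣ m) (hn : 2 ∣ n) :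
    aa + radv l m n ∈ CvC2starL l := mem_starL.2 (Or.inr (Or.inl ⟨aa, h, m, n, hm, hn, rfl⟩))

lemma long_mem_L {aa : V l} (h : aa ∈ BCl l) (m n : ℤ) (hmn : 2 ∣ m * n) :
    aa + radv l (2 * m) (2 * n) ∈ CvC2starL l :=
  mem_starL.2 (Or.inr (Or.inr ⟨aa, h, m, n, hmn, rfl⟩))

lemma εv_mem_S (i : Fin l) : εv l i ∈ CvC2starS l := by
  have := short_mem_S (εv_mem_BCs i) 0 0 (by norm_num)
  rwa [radv_zero, add_zero] at this

lemma εv_mem_L (i : Fin l) : εv l i ∈ CvC2starL l := by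
  have := short_mem_L (εv_mem_BCs i) 0 0
  rwa [radv_zero, add_zero] at this

lemma εε_mem_S {i j : Fin l} (hij : i ≠ j) : εv l i + εv l j ∈ CvC2starS l := by
  have := mid_mem_S (εε_mem_BCm hij) 0 0 (by norm_num) (by norm_num)
  rwa [radv_zero, add_zero] at this

lemma εε_mem_L {i j : Fin l} (hij : i ≠ j) : εv l i + εv l j ∈ CvC2starL l := by
  have := mid_mem_L (εε_mem_BCm hij) 0 0 (by norm_num) (by norm_num)
  rwa [radv_zero, add_zero] at this

lemma twoεv_mem_S (i : Fin l) : (2 : ℝ) • εv l i ∈ CvC2starS l := by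
  have := long_mem_S (twoεv_mem_BCl i) 0 0 (by norm_num) (by norm_num)
  rwa [radv_zero, add_zero] at this

lemma twoεv_mem_L (i : Fin l) : (2 : ℝ) • εv l i ∈ CvC2starL l := by
  have h : (2 : ℤ) ∣ 0 * 0 := by norm_num
  have := long_mem_L (twoεv_mem_BCl i) 0 0 h
  norm_num at this
  rwa [radv_zero, add_zero] at this

/-! ### marking -/

lemma radv_two_zero_ne : radv l 2 0 ≠ 0 := by
  intro h
  have := congrFun h (Fin.natAdd l 0)
  rw [radv_nat0] at this
  norm_num at this

lemma marking_of {R : Set (V l)} (hl : 1 ≤ l)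
    (h1 : εv l ⟨0, hl⟩ + radv l 2 0 ∈ R) (h2 : εv l ⟨0, hl⟩ ∈ R) :
    IsMarking l R (Ga l) := by
  refine ⟨?_, ?_, radv l 2 0, radv_two_zero_ne, ?_, ?_⟩
  · unfold Ga radSpan
    apply Submodule.span_mono
    intro x hx
    simp only [Set.mem_singleton_iff] at hx
    subst hx
    exact Set.mem_insert _ _
  · unfold Ga
    exact finrank_span_singleton av_ne_zero
  · unfold Ga
    rw [radv_av]
    exact Submodule.smul_mem _ _ (Submodule.mem_span_singleton_self _)
  · have he : radv l 2 0 = (εv l ⟨0, hl⟩ + radv l 2 0) - εv l ⟨0, hl⟩ := by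
      rw [add_sub_cancel_left]
    rw [he]
    exact AddSubgroup.sub_mem _ (AddSubgroup.subset_closure h1) (AddSubgroup.subset_closure h2)

/-! ### quotient images -/

lemma mkQ_drop_a (aa : V l) (m n : ℤ) :
    (Ga l).mkQ (aa + radv l m n) = (Ga l).mkQ (aa + radv l 0 n) := by
  rw [Submodule.mkQ_apply, Submodule.mkQ_apply, Submodule.Quotient.eq]
  have he : (aa + radv l m n) - (aa + radv l 0 n) = ((m : ℤ) : ℝ) • av l := by
    unfold radv
    push_cast
    module
  rw [he]
  exact Submodule.smul_mem _ _ (Submodule.mem_span_singleton_self _)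

lemma aff_mem_short {aa : V l} (h : aa ∈ BCs l) (n : ℤ) : aa + radv l 0 n ∈ Aff l .CvC :=
  mem_affCvC.2 (Or.inl ⟨aa, h, n, rfl⟩)

lemma aff_mem_mid {aa : V l} (h : aa ∈ BCm l) (n : ℤ) (hn : 2 ∣ n) :
    aa + radv l 0 n ∈ Aff l .CvC :=
  mem_affCvC.2 (Or.inr (Or.inl ⟨aa, h, n, hn, rfl⟩))

lemma aff_mem_long {aa : V l} (h : aa ∈ BCl l) (n : ℤ) (hn : 2 ∣ n) :
    aa + radv l 0 n ∈ Aff l .CvC :=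
  mem_affCvC.2 (Or.inr (Or.inr ⟨aa, h, n, hn, rfl⟩))

lemma aff_sub_S : Aff l .CvC ⊆ CvC2starS l := by
  intro x hx
  rcases mem_affCvC.1 hx with ⟨aa, h1, n, rfl⟩ | ⟨aa, h1, n, hn, rfl⟩ | ⟨aa, h1, n, hn, rfl⟩
  · exact short_mem_S h1 0 n (by simp)
  · exact mid_mem_S h1 0 n (by norm_num) hn
  · exact long_mem_S h1 0 n (by norm_num) hn

lemma aff_sub_L : Aff l .CvC ⊆ CvC2starL l := by
  intro x hx
  rcases mem_affCvC.1 hx with ⟨aa, h1, n, rfl⟩ | ⟨aa, h1, n, hn, rfl⟩ | ⟨aa, h1, n, hn, rfl⟩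
  · exact short_mem_L h1 0 n
  · exact mid_mem_L h1 0 n (by norm_num) hn
  · obtain ⟨n', rfl⟩ := hn
    have := long_mem_L h1 0 n' (by simp)
    norm_num at this ⊢
    exact this

lemma mkQ_image_S : (Ga l).mkQ '' CvC2starS l = (Ga l).mkQ '' Aff l .CvC := by
  apply Set.Subset.antisymm
  · rintro _ ⟨x, hx, rfl⟩
    rcases mem_starS.1 hx with ⟨aa, h1, m, n, hmn, rfl⟩ | ⟨aa, h1, m, n, hm, hn, rfl⟩ |
      ⟨aa, h1, m, n, hm, hn, rfl⟩
    · exact ⟨aa + radv l 0 n, aff_mem_short h1 n, (mkQ_drop_a aa m n).symm⟩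
    · exact ⟨aa + radv l 0 n, aff_mem_mid h1 n hn, (mkQ_drop_a aa m n).symm⟩
    · exact ⟨aa + radv l 0 n, aff_mem_long h1 n hn, (mkQ_drop_a aa m n).symm⟩
  · rintro _ ⟨y, hy, rfl⟩
    exact ⟨y, aff_sub_S hy, rfl⟩

lemma mkQ_image_L : (Ga l).mkQ '' CvC2starL l = (Ga l).mkQ '' Aff l .CvC := by
  apply Set.Subset.antisymm
  · rintro _ ⟨x, hx, rfl⟩
    rcases mem_starL.1 hx with ⟨aa, h1, m, n, rfl⟩ | ⟨aa, h1, m, n, hm, hn, rfl⟩ |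
      ⟨aa, h1, m, n, hmn, rfl⟩
    · exact ⟨aa + radv l 0 n, aff_mem_short h1 n, (mkQ_drop_a aa m n).symm⟩
    · exact ⟨aa + radv l 0 n, aff_mem_mid h1 n hn, (mkQ_drop_a aa m n).symm⟩
    · exact ⟨aa + radv l 0 (2 * n), aff_mem_long h1 (2 * n) ⟨n, rfl⟩,
        (mkQ_drop_a aa (2 * m) (2 * n)).symm⟩
  · rintro _ ⟨y, hy, rfl⟩
    exact ⟨y, aff_sub_L hy, rfl⟩

/-! ### non-isomorphism -/

lemma length_starL {x : V l} (hx : x ∈ CvC2starL l) :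
    Iform l x x = 1 ∨ Iform l x x = 2 ∨ Iform l x x = 4 := by
  rcases mem_starL.1 hx with ⟨aa, h1, m, n, rfl⟩ | ⟨aa, h1, m, n, _, _, rfl⟩ |
    ⟨aa, h1, m, n, _, rfl⟩
  · rw [Iform_add_radv]; exact Or.inl (Iform_BCs h1)
  · rw [Iform_add_radv]; exact Or.inr (Or.inl (Iform_BCm h1))
  · rw [Iform_add_radv]; exact Or.inr (Or.inr (Iform_BCl h1))

lemma two_smul_of_short_S {x : V l} (hx : x ∈ CvC2starS l) (hlen : Iform l x x = 1) :
    (2 : ℝ) • x ∈ CvC2starS l := by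
  rcases mem_starS.1 hx with ⟨aa, h1, m, n, hmn, rfl⟩ | ⟨aa, h1, m, n, _, _, rfl⟩ |
    ⟨aa, h1, m, n, _, _, rfl⟩
  · obtain ⟨i, σ, hσ, rfl⟩ := BCs_cases h1
    have heq : (2 : ℝ) • (σ • εv l i + radv l m n)
        = (2 * σ) • εv l i + radv l (2 * m) (2 * n) := by
      unfold radv
      push_cast
      module
    rw [heq]
    exact long_mem_S (mem_BCl i hσ) (2 * m) (2 * n) ⟨m, rfl⟩ ⟨n, rfl⟩
  · rw [Iform_add_radv, Iform_BCm h1] at hlen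
    norm_num at hlen
  · rw [Iform_add_radv, Iform_BCl h1] at hlen
    norm_num at hlen

lemma twoβ_not_L (hl : 1 ≤ l) :
    (2 : ℝ) • (εv l ⟨0, hl⟩ + radv l 1 1) ∉ CvC2starL l := by
  intro h
  have hIβ : Iform l (εv l ⟨0, hl⟩ + radv l 1 1) (εv l ⟨0, hl⟩ + radv l 1 1) = 1 := by
    rw [Iform_add_radv]
    simp [Iform_εv_εv]
  have hI4 : Iform l ((2 : ℝ) • (εv l ⟨0, hl⟩ + radv l 1 1))
      ((2 : ℝ) • (εv l ⟨0, hl⟩ + radv l 1 1)) = 4 := by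
    rw [Iform_smul_left, Iform_smul_right, hIβ]
    norm_num
  rcases mem_starL.1 h with ⟨aa, h1, m, n, he⟩ | ⟨aa, h1, m, n, _, _, he⟩ |
    ⟨aa, h1, m, n, hmn, he⟩
  · rw [he, Iform_add_radv, Iform_BCs h1] at hI4
    norm_num at hI4
  · rw [he, Iform_add_radv, Iform_BCm h1] at hI4
    norm_num at hI4
  · have haaf : aa ∈ BCfull l := mem_BCfull_iff.2 (Or.inr (Or.inr h1))
    have e0 := congrFun he (Fin.natAdd l 0)
    have e1 := congrFun he (Fin.natAdd l 1)
    rw [Pi.smul_apply, Pi.add_apply, Pi.add_apply, εv_apply_nat, radv_nat0, zero_add,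
      BCfull_nat_coord haaf 0, radv_nat0, zero_add] at e0
    rw [Pi.smul_apply, Pi.add_apply, Pi.add_apply, εv_apply_nat, radv_nat1, zero_add,
      BCfull_nat_coord haaf 1, radv_nat1, zero_add] at e1
    have hm1 : m = 1 := by
      have : (2 : ℝ) = ((2 * m : ℤ) : ℝ) := by
        push_cast
        simpa using e0
      have h2 : (2 : ℤ) = 2 * m := by exact_mod_cast this
      omega
    have hn1 : n = 1 := by
      have : (2 : ℝ) = ((2 * n : ℤ) : ℝ) := by
        push_cast
        simpa using e1
      have h2 : (2 : ℤ) = 2 * n := by exact_mod_cast this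
      omega
    rw [hm1, hn1] at hmn
    norm_num at hmn

lemma not_iso (hl : 1 ≤ l) : ¬ IsoRSa l (CvC2starS l) (CvC2starL l) := by
  rintro ⟨φ, c, hc, hsim, hGa, himg⟩
  set i0 : Fin l := ⟨0, hl⟩ with hi0
  -- c = 1
  have hφε : φ (εv l i0) ∈ CvC2starL l := by
    rw [← himg]
    exact ⟨εv l i0, εv_mem_S i0, rfl⟩
  have hφ2ε : φ ((2 : ℝ) • εv l i0) ∈ CvC2starL l := by
    rw [← himg]
    exact ⟨(2 : ℝ) • εv l i0, twoεv_mem_S i0, rfl⟩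
  have hIε : Iform l (εv l i0) (εv l i0) = 1 := by simp [Iform_εv_εv]
  have hlc : Iform l (φ (εv l i0)) (φ (εv l i0)) = c := by
    rw [hsim, hIε, mul_one]
  have hlc4 : Iform l (φ ((2 : ℝ) • εv l i0)) (φ ((2 : ℝ) • εv l i0)) = 4 * c := by
    rw [hsim, Iform_smul_left, Iform_smul_right, hIε]
    ring
  have h1 := length_starL hφε
  have h2 := length_starL hφ2ε
  rw [hlc] at h1
  rw [hlc4] at h2
  have hc1 : c = 1 := by
    rcases h1 with rfl | rfl | rfl <;> rcases h2 with h | h | h <;> revert h <;> norm_num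
  subst hc1
  -- transport β
  have hβL : εv l i0 + radv l 1 1 ∈ CvC2starL l := short_mem_L (εv_mem_BCs i0) 1 1
  rw [← himg] at hβL
  obtain ⟨α, hαS, hφα⟩ := hβL
  have hIβ : Iform l (εv l i0 + radv l 1 1) (εv l i0 + radv l 1 1) = 1 := by
    rw [Iform_add_radv]
    exact hIε
  have hIα : Iform l α α = 1 := by
    have := hsim α α
    rw [hφα, hIβ, one_mul] at this
    exact this.symm
  have h2α : (2 : ℝ) • α ∈ CvC2starS l := two_smul_of_short_S hαS hIα
  have h2β : (2 : ℝ) • (εv l i0 + radv l 1 1) ∈ CvC2starL l := by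
    rw [← himg]
    exact ⟨(2 : ℝ) • α, h2α, by rw [map_smul, hφα]⟩
  exact twoβ_not_L hl h2β

end AuxFinal

noncomputable section

/-- **The systems `C^∨C_l^{(2)∗_s}` and `C^∨C_l^{(2)∗_l}` are genuinely distinct.** -/
theorem starS_starL_distinct {l : ℕ} (hl : 1 ≤ l) :
    (IsERS l (CvC2starS l) ∧ IsNonReducedRS l (CvC2starS l) ∧
      IsMarking l (CvC2starS l) (Ga l) ∧
      (Ga l).mkQ '' CvC2starS l = (Ga l).mkQ '' Aff l .CvC) ∧
    (IsERS l (CvC2starL l) ∧ IsNonReducedRS l (CvC2starL l) ∧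
      IsMarking l (CvC2starL l) (Ga l) ∧
      (Ga l).mkQ '' CvC2starL l = (Ga l).mkQ '' Aff l .CvC) ∧
    ¬ IsoRSa l (CvC2starS l) (CvC2starL l) := by
  have i0 : Fin l := ⟨0, hl⟩
  have hav2 : radv l 2 0 = (2 : ℝ) • av l := by simp [radv]
  have hbv1 : radv l 0 1 = (1 : ℝ) • bv l := by simp [radv]
  refine ⟨⟨⟨discrete_of_decomp decomp_starS, ?_, nonisotropic_of_decomp decomp_starS,
      integral_of_decomp decomp_starS,
      reflects_of decomp_starS (fun α hα x hx => reflV_mem_starS hα hx),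
      irred_of decomp_starS εv_mem_S (fun i j h => εε_mem_S h)⟩,
      ⟨εv l ⟨0, hl⟩, εv_mem_S _, twoεv_mem_S _⟩,
      marking_of hl (short_mem_S (εv_mem_BCs _) 2 0 (by norm_num)) (εv_mem_S _),
      mkQ_image_S⟩,
    ⟨⟨discrete_of_decomp decomp_starL, ?_, nonisotropic_of_decomp decomp_starL,
      integral_of_decomp decomp_starL,
      reflects_of decomp_starL (fun α hα x hx => reflV_mem_starL hα hx),
      irred_of decomp_starL εv_mem_L (fun i j h => εε_mem_L h)⟩,
      ⟨εv l ⟨0, hl⟩, εv_mem_L _, twoεv_mem_L _⟩,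
      marking_of hl (short_mem_L (εv_mem_BCs _) 2 0) (εv_mem_L _),
      mkQ_image_L⟩,
    not_iso hl⟩
  · refine span_top_of hl εv_mem_S
      ⟨εv l ⟨0, hl⟩ + radv l 2 0, short_mem_S (εv_mem_BCs _) 2 0 (by norm_num),
        ⟨0, hl⟩, 2, by norm_num, by rw [hav2]⟩
      ⟨εv l ⟨0, hl⟩ + radv l 0 1, short_mem_S (εv_mem_BCs _) 0 1 (by norm_num),
        ⟨0, hl⟩, 1, by norm_num, by rw [hbv1]⟩
  · refine span_top_of hl εv_mem_L
      ⟨εv l ⟨0, hl⟩ + radv l 2 0, short_mem_L (εv_mem_BCs _) 2 0,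
        ⟨0, hl⟩, 2, by norm_num, by rw [hav2]⟩
      ⟨εv l ⟨0, hl⟩ + radv l 0 1, short_mem_L (εv_mem_BCs _) 0 1,
        ⟨0, hl⟩, 1, by norm_num, by rw [hbv1]⟩

end
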